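/- Along the flow of the backward Neumann system p_x = q, q_x = −αp + (2⟨Λ²p,p⟩/⟨Λp,p⟩³)Λp − (1/⟨Λp,p⟩²)Λ²p, the quantity F_0 = ⟨Λ²p,p⟩/⟨Λp,p⟩² + ⟨q,q⟩ is conserved: d/dx F_0 = 0, provided ⟨p,p⟩ = 1 and ⟨p,q⟩ = 0 hold along the flow. -/

import Mathlib

open Finset

theorem stmt_8 (N : ℕ) (α : ℝ) (lam : Fin N → ℝ)
    (hne : ∀ j, lam j ≠ 0) (hdist : Function.Injective lam)
    (p q : ℝ → Fin N → ℝ)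
    (hΛpp : ∀ x, ∑ j, lam j * (p x j)^2 ≠ 0)
    (hpx : ∀ x j, HasDerivAt (fun y => p y j) (q x j) x)
    (hqx : ∀ x j, HasDerivAt (fun y => q y j)
      (-α * p x j
        + (2 * (∑ i, (lam i)^2 * (p x i)^2) / (∑ i, lam i * (p x i)^2)^3) * (lam j * p x j)
        - (1 / (∑ i, lam i * (p x i)^2)^2) * ((lam j)^2 * p x j)) x)
    (hsphere : ∀ x, ∑ j, (p x j)^2 = 1)
    (htangent : ∀ x, ∑ j, p x j * q x j = 0) :
    ∀ x, deriv (fun y =>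
        (∑ j, (lam j)^2 * (p y j)^2) / (∑ j, lam j * (p y j)^2)^2
          + ∑ j, (q y j)^2) x = 0 := by
  intro x
  set A := ∑ i, (lam i)^2 * (p x i)^2 with hA
  set B := ∑ i, lam i * (p x i)^2 with hB
  have hBne : B ≠ 0 := hΛpp x
  -- derivatives of the three sums
  have hAd : HasDerivAt (fun y => ∑ j, (lam j)^2 * (p y j)^2)
      (∑ j, (lam j)^2 * (2 * p x j ^ 1 * q x j)) x := by
    apply HasDerivAt.fun_sum
    intro j _
    exact ((hpx x j).pow 2).const_mul _
  have hBd : HasDerivAt (fun y => ∑ j, lam j * (p y j)^2)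
      (∑ j, lam j * (2 * p x j ^ 1 * q x j)) x := by
    apply HasDerivAt.fun_sum
    intro j _
    exact ((hpx x j).pow 2).const_mul _
  have hCd : HasDerivAt (fun y => ∑ j, (q y j)^2)
      (∑ j, 2 * q x j ^ 1 * (-α * p x j
        + (2 * A / B^3) * (lam j * p x j)
        - (1 / B^2) * ((lam j)^2 * p x j))) x := by
    apply HasDerivAt.fun_sum
    intro j _
    exact (hqx x j).pow 2
  have hF : HasDerivAt (fun y =>
        (∑ j, (lam j)^2 * (p y j)^2) / (∑ j, lam j * (p y j)^2)^2
          + ∑ j, (q y j)^2)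
      (((∑ j, (lam j)^2 * (2 * p x j ^ 1 * q x j)) * B^2
          - A * (2 * B ^ 1 * (∑ j, lam j * (2 * p x j ^ 1 * q x j)))) / (B^2)^2
        + ∑ j, 2 * q x j ^ 1 * (-α * p x j
        + (2 * A / B^3) * (lam j * p x j)
        - (1 / B^2) * ((lam j)^2 * p x j))) x := by
    exact (hAd.div (hBd.pow 2) (pow_ne_zero 2 hBne)).add hCd
  rw [hF.deriv]
  -- simplify the sums
  set S0 := ∑ j, p x j * q x j with hS0
  set S1 := ∑ j, lam j * p x j * q x j with hS1
  set S2 := ∑ j, (lam j)^2 * p x j * q x j with hS2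
  have e1 : (∑ j, (lam j)^2 * (2 * p x j ^ 1 * q x j)) = 2 * S2 := by
    rw [hS2, Finset.mul_sum]; exact Finset.sum_congr rfl fun j _ => by ring
  have e2 : (∑ j, lam j * (2 * p x j ^ 1 * q x j)) = 2 * S1 := by
    rw [hS1, Finset.mul_sum]; exact Finset.sum_congr rfl fun j _ => by ring
  have e3 : (∑ j, 2 * q x j ^ 1 * (-α * p x j
        + (2 * A / B^3) * (lam j * p x j)
        - (1 / B^2) * ((lam j)^2 * p x j)))
      = S0 * (-2 * α) + S1 * (2 * (2 * A / B^3)) - S2 * (2 / B^2) := by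
    rw [show (∑ j, 2 * q x j ^ 1 * (-α * p x j
        + (2 * A / B^3) * (lam j * p x j)
        - (1 / B^2) * ((lam j)^2 * p x j)))
      = ∑ j, (p x j * q x j * (-2 * α)
          + lam j * p x j * q x j * (2 * (2 * A / B^3))
          - (lam j)^2 * p x j * q x j * (2 / B^2)) from
      Finset.sum_congr rfl fun j _ => by ring]
    rw [Finset.sum_sub_distrib, Finset.sum_add_distrib,
      ← Finset.sum_mul, ← Finset.sum_mul, ← Finset.sum_mul]
  have hS0z : S0 = 0 := htangent x
  rw [e1, e2, e3, hS0z]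
  field_simp
  ring
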